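/- (Andréief's identity in the shuffle algebra.) Let d ≥ 1 and consider the shuffle algebra on the alphabet of 2d letters {1,…,d} ∪ {1',…,d'}. Let M be the d×d matrix whose (i,j) entry is the two-letter word i j'. Then det_⧢(M) = Σ_{σ,τ∈S_d} sign(σ)sign(τ) · [ σ(1)τ(1)' ≻ σ(2)τ(2)' ≻ ⋯ ≻ σ(d)τ(d)' ], where on the right each σ(i)τ(i)' is a two-letter word and the iterated right half-shuffle products are bracketed from the left. -/

import Mathlib

open scoped BigOperators

namespace ShufflePaper

variable {α : Type*}

/-- All shuffles (interleavings) of two words, with multiplicity. -/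
def shuffles : List α → List α → Multiset (List α)
  | [], ys => {ys}
  | x :: xs, [] => {x :: xs}
  | x :: xs, y :: ys =>
      ((shuffles xs (y :: ys)).map (x :: ·)) + ((shuffles (x :: xs) ys).map (y :: ·))
  termination_by l₁ l₂ => l₁.length + l₂.length

/-- The element of the shuffle algebra corresponding to a multiset of words. -/
noncomputable def ofMS (m : Multiset (List α)) : List α →₀ ℝ :=
  (m.map fun l => Finsupp.single l (1 : ℝ)).sum

/-- The shuffle product on the shuffle algebra `T(ℝ^d)` (bilinear extension). -/
noncomputable def sh (x y : List α →₀ ℝ) : List α →₀ ℝ :=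
  x.sum fun v a => y.sum fun w b => (a * b) • ofMS (shuffles v w)

/-- Iterated shuffle product of a list of elements (empty word is the unit). -/
noncomputable def shProd : List (List α →₀ ℝ) → (List α →₀ ℝ)
  | [] => Finsupp.single [] 1
  | x :: xs => sh x (shProd xs)

/-- Determinant in the commutative ring `(T(ℝ^d), ⧢)` via the Leibniz formula. -/
noncomputable def detSh {n : ℕ} (M : Fin n → Fin n → (List α →₀ ℝ)) : List α →₀ ℝ :=
  ∑ σ : Equiv.Perm (Fin n), (Equiv.Perm.sign σ : ℤ) •
    shProd ((List.finRange n).map fun i => M (σ i) i)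

/-- The matrix `W_d` whose `(i,j)` entry is the two-letter word `ij`. -/
noncomputable def W (d : ℕ) : Fin d → Fin d → (List (Fin d) →₀ ℝ) :=
  fun i j => Finsupp.single [i, j] 1

/-- `inv(t_{1,d}) = Σ_σ sign(σ) σ(1)⋯σ(d)`. -/
noncomputable def invT1 (d : ℕ) : List (Fin d) →₀ ℝ :=
  ∑ σ : Equiv.Perm (Fin d), (Equiv.Perm.sign σ : ℤ) •
    Finsupp.single ((List.finRange d).map σ) 1

/-- `inv(t_{2,d}) = Σ_{σ,τ} sign(σ)sign(τ) σ(1)τ(1)⋯σ(d)τ(d)`. -/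
noncomputable def invT2 (d : ℕ) : List (Fin d) →₀ ℝ :=
  ∑ σ : Equiv.Perm (Fin d), ∑ τ : Equiv.Perm (Fin d),
    ((Equiv.Perm.sign σ : ℤ) * (Equiv.Perm.sign τ : ℤ)) •
      Finsupp.single ((List.finRange d).flatMap fun i => [σ i, τ i]) 1

/- Right half-shuffle of two words: `u ≻ (v·i) = (u ⧢ v)·i`; zero if the
second word is empty. -/
open Classical in
noncomputable def hsW (u w : List α) : List α →₀ ℝ :=
  if h : w = [] then 0
  else ofMS ((shuffles u w.dropLast).map fun l => l ++ [w.getLast h])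

/-- Right half-shuffle product (bilinear extension). -/
noncomputable def hs (x y : List α →₀ ℝ) : List α →₀ ℝ :=
  x.sum fun v a => y.sum fun w b => (a * b) • hsW v w

/-- Iterated right half-shuffle of a list of words, bracketed from the left. -/
noncomputable def hsList : List (List α) → (List α →₀ ℝ)
  | [] => 0
  | w :: ws => ws.foldl (fun acc u => hs acc (Finsupp.single u 1)) (Finsupp.single w 1)

/-- Action of `σ ∈ S_n` on the span of words, permuting letter positions of
words of length `n` (letter in position `σ(k)` of `σ·w` is `w_k`); words of
other lengths are left untouched. -/
noncomputable def permAct {d : ℕ} (n : ℕ) (σ : Equiv.Perm (Fin n))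
    (x : List (Fin d) →₀ ℝ) : List (Fin d) →₀ ℝ :=
  x.sum fun w a =>
    if h : w.length = n then
      Finsupp.single (List.ofFn fun p : Fin n => w.get (Fin.cast h.symm (σ⁻¹ p))) a
    else Finsupp.single w a

/-- The subgroup `H ≤ S_{2d}` generated by the transpositions `(2i−1, 2i+1)` and
`(2i, 2i+2)`, `1 ≤ i ≤ d−1` (0-indexed: all swaps `(k, k+2)` with `k+2 < 2d`). -/
def Hgrp (d : ℕ) : Subgroup (Equiv.Perm (Fin (2 * d))) :=
  Subgroup.closure
    {g | ∃ k : ℕ, ∃ hk : k + 2 < 2 * d, g = Equiv.swap ⟨k, by omega⟩ ⟨k + 2, hk⟩}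

/-- Pfaffian in the shuffle algebra, via the sum over permutations. -/
noncomputable def pfSh {n : ℕ} (A : Fin n → Fin n → (List α →₀ ℝ)) : List α →₀ ℝ :=
  ((2 ^ (n / 2) * (n / 2).factorial : ℝ))⁻¹ •
    ∑ π : Equiv.Perm (Fin n), (Equiv.Perm.sign π : ℤ) •
      shProd ((List.finRange (n / 2)).map fun i : Fin (n / 2) =>
        A (π ⟨2 * (i : ℕ), by have := i.isLt; omega⟩)
          (π ⟨2 * (i : ℕ) + 1, by have := i.isLt; omega⟩))

/-- The matrix `Z_d` from de Bruijn's formula, odd case. -/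
noncomputable def Z (d : ℕ) : Fin (d + 1) → Fin (d + 1) → (List (Fin d) →₀ ℝ) :=
  fun i j =>
    if hi : (i : ℕ) < d then
      if hj : (j : ℕ) < d then
        Finsupp.single [⟨i, hi⟩, ⟨j, hj⟩] 1 - Finsupp.single [⟨j, hj⟩, ⟨i, hi⟩] 1
      else Finsupp.single [⟨i, hi⟩] 1
    else if hj : (j : ℕ) < d then -Finsupp.single [⟨j, hj⟩] 1
    else 0

theorem shuffles_nil_left (v : List α) : shuffles [] v = {v} := by
  cases v <;> simp [shuffles]

theorem shuffles_nil_right (u : List α) : shuffles u [] = {u} := by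
  cases u <;> simp [shuffles]

theorem shuffles_comm : (u v : List α) → shuffles u v = shuffles v u
  | [], v => by rw [shuffles_nil_left, shuffles_nil_right]
  | x :: xs, [] => by rw [shuffles_nil_left, shuffles_nil_right]
  | x :: xs, y :: ys => by
      rw [shuffles, shuffles, shuffles_comm xs (y :: ys), shuffles_comm (x :: xs) ys, add_comm]
  termination_by u v => u.length + v.length
  decreasing_by all_goals simp

theorem shuffles_snoc : (u v : List α) → (a b : α) →
    shuffles (u ++ [a]) (v ++ [b]) =
      (shuffles (u ++ [a]) v).map (· ++ [b]) + (shuffles u (v ++ [b])).map (· ++ [a])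
  | [], [], a, b => by
      simp [shuffles, shuffles_nil_left, shuffles_nil_right]
  | [], y :: v, a, b => by
      have h := shuffles_snoc [] v a b
      simp only [List.nil_append, List.cons_append] at *
      simp only [shuffles, shuffles_nil_left, shuffles_nil_right] at *
      rw [h]
      simp [Multiset.map_map, Function.comp_def]
      try abel
  | x :: u, [], a, b => by
      have h := shuffles_snoc u [] a b
      simp only [List.nil_append, List.cons_append] at *
      simp only [shuffles, shuffles_nil_left, shuffles_nil_right] at *
      rw [h]
      simp [Multiset.map_map, Function.comp_def]
      try abel
  | x :: u, y :: v, a, b => by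
      have h1 := shuffles_snoc u (y :: v) a b
      have h2 := shuffles_snoc (x :: u) v a b
      simp only [List.nil_append, List.cons_append] at *
      simp only [shuffles, shuffles_nil_left, shuffles_nil_right] at *
      rw [h1, h2]
      simp [Multiset.map_map, Function.comp_def]
      try abel
  termination_by u v a b => u.length + v.length
  decreasing_by all_goals simp

theorem shuffles_assoc : (u v w : List α) →
    (shuffles u v).bind (fun m => shuffles m w) = (shuffles v w).bind (fun m => shuffles u m)
  | [], v, w => by
      have hb : ∀ s : Multiset (List α), (s.bind fun m => ({m} : Multiset (List α))) = s := by
        intro s; simpa using Multiset.bind_singleton (s := s) id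
      simp [shuffles_nil_left, hb]
  | x :: u, [], w => by
      simp [shuffles_nil_left, shuffles_nil_right]
  | x :: u, y :: v, [] => by
      have hb : ∀ s : Multiset (List α), (s.bind fun m => ({m} : Multiset (List α))) = s := by
        intro s; simpa using Multiset.bind_singleton (s := s) id
      simp [shuffles_nil_right, hb]
  | x :: u, y :: v, z :: w => by
      have h1 := shuffles_assoc u (y :: v) (z :: w)
      have h2 := shuffles_assoc (x :: u) v (z :: w)
      have h3 := shuffles_assoc (x :: u) (y :: v) w
      calc (shuffles (x :: u) (y :: v)).bind (fun m => shuffles m (z :: w))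
          = Multiset.map (x :: ·) ((shuffles u (y :: v)).bind (fun m => shuffles m (z :: w)))
            + Multiset.map (y :: ·) ((shuffles (x :: u) v).bind (fun m => shuffles m (z :: w)))
            + Multiset.map (z :: ·) ((shuffles (x :: u) (y :: v)).bind (fun m => shuffles m w)) := by
              simp only [shuffles, Multiset.add_bind, Multiset.bind_map, Multiset.map_bind,
                Multiset.bind_add, Multiset.map_map, Multiset.map_add]
              try abel
        _ = Multiset.map (x :: ·) ((shuffles (y :: v) (z :: w)).bind (fun m => shuffles u m))
            + Multiset.map (y :: ·) ((shuffles v (z :: w)).bind (fun m => shuffles (x :: u) m))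
            + Multiset.map (z :: ·) ((shuffles (y :: v) w).bind (fun m => shuffles (x :: u) m)) := by
              rw [h1, h2, h3]
        _ = (shuffles (y :: v) (z :: w)).bind (fun m => shuffles (x :: u) m) := by
              simp only [shuffles, Multiset.add_bind, Multiset.bind_map, Multiset.map_bind,
                Multiset.bind_add, Multiset.map_map, Multiset.map_add]
              try abel
  termination_by u v w => u.length + v.length + w.length
  decreasing_by all_goals simp <;> omega

theorem ofMS_add (m n : Multiset (List α)) : ofMS (m + n) = ofMS m + ofMS n := by
  simp [ofMS]

theorem ofMS_singleton (l : List α) : ofMS {l} = Finsupp.single l 1 := by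
  simp [ofMS]

theorem sh_single (u v : List α) (c e : ℝ) :
    sh (Finsupp.single u c) (Finsupp.single v e) = (c * e) • ofMS (shuffles u v) := by
  unfold sh
  rw [Finsupp.sum_single_index, Finsupp.sum_single_index]
  · simp
  · rw [Finsupp.sum_single_index] <;> simp

theorem hs_single (u v : List α) (c e : ℝ) :
    hs (Finsupp.single u c) (Finsupp.single v e) = (c * e) • hsW u v := by
  unfold hs
  rw [Finsupp.sum_single_index, Finsupp.sum_single_index]
  · simp
  · rw [Finsupp.sum_single_index] <;> simp

theorem sh_single_one (u v : List α) :
    sh (Finsupp.single u 1) (Finsupp.single v 1) = ofMS (shuffles u v) := by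
  rw [sh_single]; simp

theorem hs_single_one (u v : List α) :
    hs (Finsupp.single u 1) (Finsupp.single v 1) = hsW u v := by
  rw [hs_single]; simp

theorem sh_zero_right (x : List α →₀ ℝ) : sh x 0 = 0 := by
  simp [sh, Finsupp.sum_zero_index]

theorem hs_zero_left (z : List α →₀ ℝ) : hs 0 z = 0 := by
  simp [hs, Finsupp.sum_zero_index]

theorem sh_add_right (x y z : List α →₀ ℝ) : sh x (y + z) = sh x y + sh x z := by
  unfold sh
  have h : ∀ (v : List α) (a : ℝ),
      ((y + z).sum fun w b => (a * b) • ofMS (shuffles v w)) =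
        (y.sum fun w b => (a * b) • ofMS (shuffles v w)) +
          (z.sum fun w b => (a * b) • ofMS (shuffles v w)) := by
    intro v a
    exact Finsupp.sum_add_index' (by simp) (fun w b₁ b₂ => by rw [mul_add, add_smul])
  simp only [h]
  exact Finsupp.sum_add

theorem hs_add_left (x y z : List α →₀ ℝ) : hs (x + y) z = hs x z + hs y z := by
  unfold hs
  refine Finsupp.sum_add_index' (fun v => by simp) (fun v a₁ a₂ => ?_)
  rw [← Finsupp.sum_add]
  congr 1; ext w b; rw [add_mul, add_smul]

theorem sh_smul_right (c : ℝ) (x y : List α →₀ ℝ) : sh x (c • y) = c • sh x y := by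
  unfold sh
  have h : ∀ (v : List α) (a : ℝ),
      ((c • y).sum fun w b => (a * b) • ofMS (shuffles v w)) =
        c • (y.sum fun w b => (a * b) • ofMS (shuffles v w)) := by
    intro v a
    rw [Finsupp.sum_smul_index (fun w => by simp), Finsupp.smul_sum]
    congr 1; ext w b
    rw [smul_smul]; ring_nf
  simp only [h]
  rw [← Finsupp.smul_sum]

theorem hs_smul_left (c : ℝ) (x z : List α →₀ ℝ) : hs (c • x) z = c • hs x z := by
  unfold hs
  rw [Finsupp.sum_smul_index (fun v => by simp [Finsupp.sum]), Finsupp.smul_sum]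
  refine Finsupp.sum_congr (fun v _ => ?_)
  rw [Finsupp.smul_sum]
  refine Finsupp.sum_congr (fun w _ => ?_)
  rw [smul_smul, mul_assoc]

theorem sh_sum_right {ι : Type*} (x : List α →₀ ℝ) (s : Finset ι) (f : ι → (List α →₀ ℝ)) :
    sh x (∑ i ∈ s, f i) = ∑ i ∈ s, sh x (f i) := by
  classical
  induction s using Finset.induction with
  | empty => simp [sh_zero_right]
  | insert i t hni ih => rw [Finset.sum_insert hni, sh_add_right, ih, Finset.sum_insert hni]

theorem hs_sum_left {ι : Type*} (z : List α →₀ ℝ) (s : Finset ι) (f : ι → (List α →₀ ℝ)) :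
    hs (∑ i ∈ s, f i) z = ∑ i ∈ s, hs (f i) z := by
  classical
  induction s using Finset.induction with
  | empty => simp [hs_zero_left]
  | insert i t hni ih => rw [Finset.sum_insert hni, hs_add_left, ih, Finset.sum_insert hni]

theorem sh_zsmul_right (k : ℤ) (x y : List α →₀ ℝ) : sh x (k • y) = k • sh x y := by
  rw [← Int.cast_smul_eq_zsmul ℝ (b := y), ← Int.cast_smul_eq_zsmul ℝ (b := sh x y), sh_smul_right]

/-- `sh` of a single against `ofMS`. -/
theorem sh_single_ofMS (u : List α) (m : Multiset (List α)) :
    sh (Finsupp.single u 1) (ofMS m) = ofMS (m.bind (shuffles u)) := by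
  induction m using Multiset.induction with
  | empty => simp [ofMS, sh_zero_right]
  | cons l m ih =>
      have h1 : ofMS (l ::ₘ m) = Finsupp.single l 1 + ofMS m := by simp [ofMS]
      rw [Multiset.cons_bind, ofMS_add, h1, sh_add_right, ih, sh_single_one]

/-- `hs` of `ofMS` against a single nonempty word. -/
theorem hs_ofMS_single (m : Multiset (List α)) (z : List α) (hz : z ≠ []) :
    hs (ofMS m) (Finsupp.single z 1) =
      ofMS (m.bind fun v => (shuffles v z.dropLast).map (· ++ [z.getLast hz])) := by
  induction m using Multiset.induction with
  | empty => simp [ofMS, hs_zero_left]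
  | cons l m ih =>
      have h1 : ofMS (l ::ₘ m) = Finsupp.single l 1 + ofMS m := by simp [ofMS]
      rw [Multiset.cons_bind, ofMS_add, h1, hs_add_left, ih, hs_single_one, hsW, dif_neg hz]


theorem key1 (u' v' : List α) (a b : α) :
    ofMS (shuffles (u' ++ [a]) (v' ++ [b])) =
      hsW (u' ++ [a]) (v' ++ [b]) + hsW (v' ++ [b]) (u' ++ [a]) := by
  rw [shuffles_snoc, ofMS_add, hsW, dif_neg (by simp : ¬(v' ++ [b] = [])),
    hsW, dif_neg (by simp : ¬(u' ++ [a] = []))]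
  simp only [List.dropLast_concat, List.getLast_append_singleton]
  congr 1
  rw [shuffles_comm u' (v' ++ [b])]

theorem key2 (x' v z' : List α) (a b : α) :
    sh (Finsupp.single (x' ++ [a]) 1) (hsW v (z' ++ [b])) =
      hs (ofMS (shuffles (x' ++ [a]) v)) (Finsupp.single (z' ++ [b]) 1)
        + hs (hsW v (z' ++ [b])) (Finsupp.single (x' ++ [a]) 1) := by
  have hz : z' ++ [b] ≠ [] := by simp
  have hx : x' ++ [a] ≠ [] := by simp
  rw [hsW, dif_neg hz, sh_single_ofMS, hs_ofMS_single _ _ hz, hs_ofMS_single _ _ hx, ← ofMS_add]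
  congr 1
  simp only [List.dropLast_concat, List.getLast_append_singleton]
  rw [Multiset.bind_map, Multiset.bind_map]
  have hsplit : ∀ l : List α, shuffles (x' ++ [a]) (l ++ [b]) =
      (shuffles (x' ++ [a]) l).map (· ++ [b]) + (shuffles (l ++ [b]) x').map (· ++ [a]) := by
    intro l
    rw [shuffles_snoc, shuffles_comm x' (l ++ [b])]
  rw [Multiset.bind_congr (fun l _ => hsplit l), Multiset.bind_add]
  congr 1
  rw [← Multiset.map_bind, ← Multiset.map_bind, shuffles_assoc]

theorem claimC (x z : List α) (hx : x ≠ []) (hz : z ≠ []) (Y : List α →₀ ℝ) :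
    sh (Finsupp.single x 1) (hs Y (Finsupp.single z 1)) =
      hs (sh (Finsupp.single x 1) Y) (Finsupp.single z 1)
        + hs (hs Y (Finsupp.single z 1)) (Finsupp.single x 1) := by
  induction Y using Finsupp.induction_linear with
  | zero => simp [hs_zero_left, sh_zero_right]
  | add f g hf hg =>
      rw [hs_add_left, sh_add_right, sh_add_right, hs_add_left, hs_add_left, hf, hg]
      abel
  | single v c =>
      have hvc : (Finsupp.single v c : List α →₀ ℝ) = c • Finsupp.single v 1 := by
        rw [Finsupp.smul_single, smul_eq_mul, mul_one]
      rw [hvc]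
      simp only [hs_smul_left, sh_smul_right]
      rw [← smul_add]
      congr 1
      rw [hs_single_one, sh_single_one]
      obtain ⟨x', a, rfl⟩ : ∃ x' a, x = x' ++ [a] :=
        ⟨x.dropLast, x.getLast hx, (List.dropLast_append_getLast hx).symm⟩
      obtain ⟨z', b, rfl⟩ : ∃ z' b, z = z' ++ [b] :=
        ⟨z.dropLast, z.getLast hz, (List.dropLast_append_getLast hz).symm⟩
      exact key2 x' v z' a b


theorem hsList_snoc (L : List (List α)) (hL : L ≠ []) (z : List α) :
    hsList (L ++ [z]) = hs (hsList L) (Finsupp.single z 1) := by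
  cases L with
  | nil => exact absurd rfl hL
  | cons w ws => simp [hsList, List.foldl_append]

/-- Insert `x` at position `i` in `L`. -/
def ins (i : ℕ) (x : α) (L : List α) : List α := L.take i ++ x :: L.drop i

theorem ins_zero (x : α) (L : List α) : ins 0 x L = x :: L := by simp [ins]

theorem ins_length (x : α) (L : List α) : ins L.length x L = L ++ [x] := by simp [ins]

theorem ins_ne_nil (i : ℕ) (x : α) (L : List α) : ins i x L ≠ [] := by simp [ins]

theorem ins_snoc (i : ℕ) (x z : α) (L : List α) (h : i ≤ L.length) :
    ins i x (L ++ [z]) = ins i x L ++ [z] := by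
  simp [ins, List.take_append, List.drop_append,
    Nat.sub_eq_zero_of_le h]

theorem lemmaB (x : List α) (hx : x ≠ []) :
    ∀ L : List (List α), L ≠ [] → (∀ w ∈ L, w ≠ []) →
    sh (Finsupp.single x 1) (hsList L) =
      ∑ i ∈ Finset.range (L.length + 1), hsList (ins i x L) := by
  intro L
  induction L using List.reverseRecOn with
  | nil => intro hL; exact absurd rfl hL
  | append_singleton M z ih =>
    intro _ hall
    have hz : z ≠ [] := hall z (by simp)
    rcases eq_or_ne M [] with rfl | hM
    · simp only [List.nil_append, List.length_singleton]
      rw [Finset.sum_range_succ, Finset.sum_range_succ, Finset.sum_range_zero, zero_add]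
      have e0 : ins 0 x [z] = [x, z] := rfl
      have e1 : ins 1 x [z] = [z, x] := rfl
      rw [e0, e1]
      have h1 : hsList [z] = Finsupp.single z 1 := rfl
      have h2 : hsList [x, z] = hs (Finsupp.single x 1) (Finsupp.single z 1) := rfl
      have h3 : hsList [z, x] = hs (Finsupp.single z 1) (Finsupp.single x 1) := rfl
      rw [h1, h2, h3, sh_single_one, hs_single_one, hs_single_one]
      obtain ⟨x', a, rfl⟩ : ∃ x' a, x = x' ++ [a] :=
        ⟨x.dropLast, x.getLast hx, (List.dropLast_append_getLast hx).symm⟩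
      obtain ⟨z', b, rfl⟩ : ∃ z' b, z = z' ++ [b] :=
        ⟨z.dropLast, z.getLast hz, (List.dropLast_append_getLast hz).symm⟩
      exact key1 x' z' a b
    · have hallM : ∀ w ∈ M, w ≠ [] := fun w hw => hall w (by simp [hw])
      have hterm : ∀ i ∈ Finset.range (M.length + 1),
          hs (hsList (ins i x M)) (Finsupp.single z 1) = hsList (ins i x (M ++ [z])) := by
        intro i hi
        rw [ins_snoc i x z M (Nat.lt_succ_iff.mp (Finset.mem_range.mp hi)),
          hsList_snoc _ (ins_ne_nil i x M)]
      calc sh (Finsupp.single x 1) (hsList (M ++ [z]))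
          = sh (Finsupp.single x 1) (hs (hsList M) (Finsupp.single z 1)) := by
            rw [hsList_snoc M hM]
        _ = hs (sh (Finsupp.single x 1) (hsList M)) (Finsupp.single z 1)
            + hs (hs (hsList M) (Finsupp.single z 1)) (Finsupp.single x 1) := claimC x z hx hz _
        _ = hs (∑ i ∈ Finset.range (M.length + 1), hsList (ins i x M)) (Finsupp.single z 1)
            + hsList ((M ++ [z]) ++ [x]) := by
            rw [ih hM hallM, ← hsList_snoc M hM, ← hsList_snoc (M ++ [z]) (by simp)]
        _ = (∑ i ∈ Finset.range (M.length + 1), hsList (ins i x (M ++ [z])))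
            + hsList (ins (M.length + 1) x (M ++ [z])) := by
            rw [hs_sum_left, Finset.sum_congr rfl hterm]
            congr 1
            have : (M ++ [z]).length = M.length + 1 := by simp
            rw [← this, ins_length]
        _ = ∑ i ∈ Finset.range ((M ++ [z]).length + 1), hsList (ins i x (M ++ [z])) := by
            have h' : (M ++ [z]).length = M.length + 1 := by simp
            rw [h']
            exact (Finset.sum_range_succ _ (M.length + 1)).symm


/-- The permutation of `Fin (n+1)` sending `i ↦ 0` and `i.succAbove j ↦ (σ j).succ`. -/
def insPerm {n : ℕ} (σ : Equiv.Perm (Fin n)) (i : Fin (n + 1)) : Equiv.Perm (Fin (n + 1)) where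
  toFun := Fin.insertNth (α := fun _ => Fin (n + 1)) i 0 (Fin.succ ∘ σ)
  invFun := Fin.cases i (fun j => i.succAbove (σ⁻¹ j))
  left_inv := by
    intro k
    refine Fin.succAboveCases i ?_ ?_ k
    · rw [Fin.insertNth_apply_same]
      exact Fin.cases_zero ..
    · intro j
      rw [Fin.insertNth_apply_succAbove]
      simp
  right_inv := by
    intro k
    cases k using Fin.cases with
    | zero =>
        show Fin.insertNth (α := fun _ => Fin (n + 1)) i 0 (Fin.succ ∘ σ) i = 0
        rw [Fin.insertNth_apply_same]
    | succ j =>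
        show Fin.insertNth (α := fun _ => Fin (n + 1)) i 0 (Fin.succ ∘ σ) (i.succAbove (σ⁻¹ j))
          = j.succ
        rw [Fin.insertNth_apply_succAbove]
        simp

theorem insPerm_apply_same {n : ℕ} (σ : Equiv.Perm (Fin n)) (i : Fin (n + 1)) :
    insPerm σ i i = 0 := by
  show Fin.insertNth (α := fun _ => Fin (n + 1)) i 0 (Fin.succ ∘ σ) i = 0
  exact Fin.insertNth_apply_same ..

theorem insPerm_apply_succAbove {n : ℕ} (σ : Equiv.Perm (Fin n)) (i : Fin (n + 1)) (j : Fin n) :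
    insPerm σ i (i.succAbove j) = (σ j).succ := by
  show Fin.insertNth (α := fun _ => Fin (n + 1)) i 0 (Fin.succ ∘ σ) (i.succAbove j) = (σ j).succ
  exact Fin.insertNth_apply_succAbove ..

theorem insPerm_bijective {n : ℕ} :
    Function.Bijective (fun p : Equiv.Perm (Fin n) × Fin (n + 1) => insPerm p.1 p.2) := by
  rw [Fintype.bijective_iff_injective_and_card]
  constructor
  · rintro ⟨σ, i⟩ ⟨σ', i'⟩ h
    simp only at h
    have hi : i = i' := by
      have h1 : insPerm σ' i' i = 0 := by rw [← h]; exact insPerm_apply_same σ i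
      have h2 : insPerm σ' i' i' = 0 := insPerm_apply_same σ' i'
      exact (insPerm σ' i').injective (h1.trans h2.symm)
    subst hi
    have hσ : σ = σ' := by
      ext j
      have h1 : insPerm σ i (i.succAbove j) = insPerm σ' i (i.succAbove j) := by rw [h]
      rw [insPerm_apply_succAbove, insPerm_apply_succAbove] at h1
      exact Fin.val_eq_of_eq (Fin.succ_injective _ h1)
    rw [hσ]
  · simp [Fintype.card_perm, Nat.factorial_succ, mul_comm]

/-- Composition with `insertNth`. -/
theorem comp_insertNth {β γ : Type*} {n : ℕ} (g : β → γ) (i : Fin (n + 1)) (c : β)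
    (q : Fin n → β) :
    g ∘ (Fin.insertNth (α := fun _ => β) i c q) =
      Fin.insertNth (α := fun _ => γ) i (g c) (g ∘ q) := by
  funext k
  refine Fin.succAboveCases i ?_ ?_ k
  · simp [Fin.insertNth_apply_same]
  · intro j
    simp [Fin.insertNth_apply_succAbove]

theorem insertNth_succ_cons {β : Type*} {n : ℕ} (j : Fin (n + 1)) (x : β) (p : Fin (n + 1) → β) :
    Fin.insertNth (α := fun _ => β) j.succ x p =
      Fin.cons (p 0) (Fin.insertNth (α := fun _ => β) j x (p ∘ Fin.succ)) := by
  funext k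
  cases k using Fin.cases with
  | zero =>
      rw [Fin.cons_zero]
      have h0 : (0 : Fin (n + 2)) = j.succ.succAbove 0 := (Fin.succ_succAbove_zero j).symm
      rw [h0, Fin.insertNth_apply_succAbove]
  | succ k =>
      rw [Fin.cons_succ]
      refine Fin.succAboveCases j ?_ ?_ k
      · rw [Fin.insertNth_apply_same, Fin.insertNth_apply_same]
      · intro m
        rw [Fin.insertNth_apply_succAbove, ← Fin.succ_succAbove_succ,
          Fin.insertNth_apply_succAbove]
        rfl

theorem ins_succ_cons {β : Type*} (i : ℕ) (x a : β) (L : List β) :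
    ins (i + 1) x (a :: L) = a :: ins i x L := by simp [ins]

theorem ofFn_insertNth {β : Type*} : ∀ {n : ℕ} (i : Fin (n + 1)) (x : β) (p : Fin n → β),
    List.ofFn (Fin.insertNth (α := fun _ => β) i x p) = ins (i : ℕ) x (List.ofFn p)
  | 0, i, x, p => by
      have hi : i = 0 := Fin.ext_iff.mpr (Nat.lt_one_iff.mp i.isLt)
      subst hi
      simp [List.ofFn_succ, ins, Fin.insertNth_apply_same]
  | n + 1, i, x, p => by
      cases i using Fin.cases with
      | zero =>
          rw [Fin.insertNth_zero']
          simp [List.ofFn_succ, ins_zero, ins]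
      | succ j =>
          rw [insertNth_succ_cons, List.ofFn_succ]
          simp only [Fin.cons_zero, Fin.cons_succ]
          rw [ofFn_insertNth j x (p ∘ Fin.succ)]
          rw [Fin.val_succ, List.ofFn_succ (f := p), ins_succ_cons]
          rfl


theorem mainLemma : ∀ (n : ℕ) (g : Fin (n + 1) → List α), (∀ j, g j ≠ []) →
    shProd ((List.ofFn g).map fun w => Finsupp.single w 1) =
      ∑ ρ : Equiv.Perm (Fin (n + 1)), hsList (List.ofFn (g ∘ ρ)) := by
  intro n
  induction n with
  | zero =>
      intro g _
      have hof : ∀ (h : Fin 1 → List α), List.ofFn h = [h 0] := fun h => by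
        simp [List.ofFn_succ]
      have hL : shProd ((List.ofFn g).map fun w => Finsupp.single w (1 : ℝ))
          = Finsupp.single (g 0) 1 := by
        rw [hof g]
        show sh (Finsupp.single (g 0) 1) (Finsupp.single ([] : List α) 1) = _
        rw [sh_single_one, shuffles_nil_right, ofMS_singleton]
      rw [hL]
      have hR : ∀ ρ : Equiv.Perm (Fin 1), hsList (List.ofFn (g ∘ ρ)) = Finsupp.single (g 0) 1 := by
        intro ρ
        have h0 : ρ 0 = 0 := Fin.ext_iff.mpr (Nat.lt_one_iff.mp (ρ 0).isLt)
        rw [hof (g ∘ ρ)]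
        show Finsupp.single ((g ∘ ρ) 0) 1 = _
        rw [Function.comp_apply, h0]
      rw [Finset.sum_congr rfl fun ρ _ => hR ρ, Finset.sum_const, Finset.card_univ,
        Fintype.card_perm, Fintype.card_fin]
      simp
  | succ m ih =>
      intro g hg
      have hx : g 0 ≠ [] := hg 0
      have hof : List.ofFn g = g 0 :: List.ofFn (g ∘ Fin.succ) := by
        rw [List.ofFn_succ]; rfl
      rw [hof]
      show sh (Finsupp.single (g 0) 1)
          (shProd ((List.ofFn (g ∘ Fin.succ)).map fun w => Finsupp.single w 1)) = _
      rw [ih (g ∘ Fin.succ) (fun j => hg j.succ), sh_sum_right]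
      have hstep : ∀ σ : Equiv.Perm (Fin (m + 1)),
          sh (Finsupp.single (g 0) 1) (hsList (List.ofFn ((g ∘ Fin.succ) ∘ σ)))
            = ∑ i : Fin (m + 2),
                hsList (ins (i : ℕ) (g 0) (List.ofFn ((g ∘ Fin.succ) ∘ σ))) := by
        intro σ
        have hne : List.ofFn ((g ∘ Fin.succ) ∘ σ) ≠ [] := by
          apply List.ne_nil_of_length_pos; simp
        have hall : ∀ w ∈ List.ofFn ((g ∘ Fin.succ) ∘ σ), w ≠ [] := by
          intro w hw
          obtain ⟨j, rfl⟩ := List.mem_ofFn.mp hw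
          exact hg (Fin.succ (σ j))
        rw [lemmaB (g 0) hx _ hne hall]
        have hlen : (List.ofFn ((g ∘ Fin.succ) ∘ σ)).length = m + 1 := by simp
        rw [hlen, ← Fin.sum_univ_eq_sum_range]
      rw [Finset.sum_congr rfl fun σ _ => hstep σ, ← Fintype.sum_prod_type']
      have hmatch : ∀ p : Equiv.Perm (Fin (m + 1)) × Fin (m + 2),
          hsList (ins ((p.2 : ℕ)) (g 0) (List.ofFn ((g ∘ Fin.succ) ∘ p.1)))
            = hsList (List.ofFn (g ∘ (insPerm p.1 p.2))) := by
        rintro ⟨σ, i⟩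
        congr 1
        have h1 : g ∘ ⇑(insPerm σ i)
            = Fin.insertNth (α := fun _ => List α) i (g 0) ((g ∘ Fin.succ) ∘ σ) := by
          have h2 : g ∘ ⇑(insPerm σ i)
              = g ∘ (Fin.insertNth (α := fun _ => Fin (m + 2)) i 0 (Fin.succ ∘ σ)) := rfl
          rw [h2, comp_insertNth]
          rfl
        rw [h1, ofFn_insertNth]
      refine Fintype.sum_bijective _ insPerm_bijective _ _ ?_
      intro p
      exact hmatch p


/-- Andréief's identity in the shuffle algebra on the alphabet
`{1,…,d} ∪ {1',…,d'}` (modelled as `Fin d ⊕ Fin d`). -/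
theorem andreief (d : ℕ) (hd : 1 ≤ d) :
    detSh (fun i j : Fin d =>
        Finsupp.single [Sum.inl i, Sum.inr j] (1 : ℝ)) =
      ∑ σ : Equiv.Perm (Fin d), ∑ τ : Equiv.Perm (Fin d),
        ((Equiv.Perm.sign σ : ℤ) * (Equiv.Perm.sign τ : ℤ)) •
          hsList ((List.finRange d).map fun i =>
            ([Sum.inl (σ i), Sum.inr (τ i)] : List (Fin d ⊕ Fin d))) := by
  obtain ⟨m, rfl⟩ : ∃ m, d = m + 1 := ⟨d - 1, by omega⟩
  unfold detSh
  have h2 : ∀ σ : Equiv.Perm (Fin (m + 1)),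
      shProd ((List.finRange (m + 1)).map fun i =>
          (fun i j => Finsupp.single [Sum.inl i, Sum.inr j] (1 : ℝ)) (σ i) i)
        = ∑ ρ : Equiv.Perm (Fin (m + 1)),
            hsList (List.ofFn fun i =>
              ([Sum.inl ((σ * ρ) i), Sum.inr (ρ i)] : List (Fin (m+1) ⊕ Fin (m+1)))) := by
    intro σ
    have ha : ((List.finRange (m + 1)).map fun i =>
          (fun i j => Finsupp.single [Sum.inl i, Sum.inr j] (1 : ℝ)) (σ i) i)
        = (List.ofFn fun i =>
            ([Sum.inl (σ i), Sum.inr i] : List (Fin (m+1) ⊕ Fin (m+1)))).map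
            fun w => Finsupp.single w 1 := by
      rw [List.ofFn_eq_map, List.map_map]
      rfl
    rw [ha, mainLemma m _ (fun j => by simp)]
    rfl
  rw [Finset.sum_congr rfl fun σ _ => by rw [h2 σ]]
  simp only [Finset.smul_sum]
  rw [Finset.sum_comm]
  have h3 : ∀ ρ : Equiv.Perm (Fin (m + 1)),
      (∑ σ : Equiv.Perm (Fin (m + 1)), (Equiv.Perm.sign σ : ℤ) •
          hsList (List.ofFn fun i =>
            ([Sum.inl ((σ * ρ) i), Sum.inr (ρ i)] : List (Fin (m+1) ⊕ Fin (m+1)))))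
        = ∑ η : Equiv.Perm (Fin (m + 1)),
            ((Equiv.Perm.sign η : ℤ) * (Equiv.Perm.sign ρ : ℤ)) •
              hsList (List.ofFn fun i =>
                ([Sum.inl (η i), Sum.inr (ρ i)] : List (Fin (m+1) ⊕ Fin (m+1)))) := by
    intro ρ
    refine Fintype.sum_equiv (Equiv.mulRight ρ) _ _ fun σ => ?_
    have hu : (Equiv.Perm.sign (σ * ρ) : ℤ) * (Equiv.Perm.sign ρ : ℤ)
        = (Equiv.Perm.sign σ : ℤ) := by
      have h : Equiv.Perm.sign (σ * ρ) * Equiv.Perm.sign ρ = Equiv.Perm.sign σ := by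
        rw [Equiv.Perm.sign_mul, mul_assoc, Int.units_mul_self, mul_one]
      calc (Equiv.Perm.sign (σ * ρ) : ℤ) * (Equiv.Perm.sign ρ : ℤ)
          = ((Equiv.Perm.sign (σ * ρ) * Equiv.Perm.sign ρ : ℤˣ) : ℤ) := (Units.val_mul _ _).symm
        _ = (Equiv.Perm.sign σ : ℤ) := by rw [h]
    rw [← hu]
    rfl
  rw [Finset.sum_congr rfl fun ρ _ => h3 ρ]
  rw [Finset.sum_comm]
  refine Finset.sum_congr rfl fun σ _ => Finset.sum_congr rfl fun τ _ => ?_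
  rw [List.ofFn_eq_map]

end ShufflePaper
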